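/- Let f, g : ℝ → ℝ be strictly decreasing functions with g(0) ≤ f(0), let b ∈ ℝ, and let x_f, x_g satisfy b = f(x_f) and b = g(x_g). Then b ∈ gsgn(f(x), x, g(x)) if and only if x equals x_f when b > f(0), x equals x_g when b < g(0), and x = 0 when g(0) ≤ b ≤ f(0). -/

import Mathlib

open Set

/-- Normal cone of the closed interval `[A,B]` at `x`. -/
noncomputable def normalCone (A B x : ℝ) : Set ℝ :=
  if x = B then Set.Ici 0
  else if x = A then Set.Iic 0
  else if A < x ∧ x < B then {0} else (∅ : Set ℝ)

/-- Normal cone of `[0,∞)` at `x`. -/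
noncomputable def normalConeIci (x : ℝ) : Set ℝ :=
  if x = 0 then Set.Iic 0
  else if 0 < x then {0} else (∅ : Set ℝ)

/-- Normal cone of `(-∞,M]` at `P`. -/
noncomputable def normalConeIic (M P : ℝ) : Set ℝ :=
  if P = M then Set.Ici 0
  else if P < M then {0} else (∅ : Set ℝ)

/-- Generalized set-valued sign function. -/
noncomputable def gsgn (a y b : ℝ) : Set ℝ :=
  if 0 < y then {b}
  else if y < 0 then {a}
  else Set.Icc (min a b) (max a b)

/-- Projection onto `[A,B]`. -/
noncomputable def proj (A B x : ℝ) : ℝ := max A (min B x)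

/-- Signed square. -/
noncomputable def Ssq (x : ℝ) : ℝ := Real.sign x * x ^ 2

/-- Signed square root. -/
noncomputable def Rsq (x : ℝ) : ℝ := Real.sign x * Real.sqrt |x|

/-- The function `Φ_A` of the paper. -/
noncomputable def PhiA (b c a : ℝ) : ℝ :=
  -Real.sign c * ((Real.sqrt (a ^ 2 * b ^ 2 + 4 * a * |c|) - a * b) / 2)

theorem stmt_6 (f g : ℝ → ℝ) (hf : StrictAnti f) (hg : StrictAnti g)
    (hfg : g 0 ≤ f 0) (b xf xg : ℝ) (hxf : b = f xf) (hxg : b = g xg) (x : ℝ) :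
    b ∈ gsgn (f x) x (g x) ↔
      x = (if f 0 < b then xf else if b < g 0 then xg else 0) := by
  unfold gsgn
  rcases lt_trichotomy x 0 with hx | hx | hx
  · -- x < 0 : membership ↔ b = f x
    rw [if_neg (by linarith), if_pos hx]
    simp only [Set.mem_singleton_iff]
    constructor
    · intro h
      have hxeq : x = xf := hf.injective (h.symm.trans hxf)
      have hb : f 0 < b := by rw [hxf, ← hxeq]; exact hf hx
      rw [if_pos hb]; exact hxeq
    · intro h
      have hb : f 0 < b := by
        by_contra hb
        rw [if_neg hb] at h
        by_cases h2 : b < g 0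
        · rw [if_pos h2] at h
          have : 0 < xg := by
            by_contra h3
            exact absurd (hxg ▸ hg.le_iff_ge.mpr (not_lt.mp h3)) (not_le.mpr h2)
          linarith [h ▸ this]
        · rw [if_neg h2] at h
          linarith [h ▸ hx]
      rw [if_pos hb] at h
      rw [hxf, h]
  · -- x = 0
    subst hx
    rw [if_neg (lt_irrefl 0), if_neg (lt_irrefl 0)]
    rw [min_eq_right hfg, max_eq_left hfg]
    constructor
    · intro h
      have h1 : ¬ f 0 < b := not_lt.mpr h.2
      have h2 : ¬ b < g 0 := not_lt.mpr h.1
      rw [if_neg h1, if_neg h2]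
    · intro h
      by_cases h1 : f 0 < b
      · rw [if_pos h1] at h
        have : xf < 0 := by
          by_contra h3
          exact absurd (hxf ▸ hf.le_iff_ge.mpr (not_lt.mp h3)) (not_le.mpr h1)
        linarith [h ▸ this]
      · by_cases h2 : b < g 0
        · rw [if_neg h1, if_pos h2] at h
          have : 0 < xg := by
            by_contra h3
            exact absurd (hxg ▸ hg.le_iff_ge.mpr (not_lt.mp h3)) (not_le.mpr h2)
          linarith [h ▸ this]
        · exact ⟨not_lt.mp h2, not_lt.mp h1⟩
  · -- 0 < x : membership ↔ b = g x
    rw [if_pos hx]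
    simp only [Set.mem_singleton_iff]
    constructor
    · intro h
      have hxeq : x = xg := hg.injective (h.symm.trans hxg)
      have hb : b < g 0 := by rw [hxg, ← hxeq]; exact hg hx
      have hb' : ¬ f 0 < b := not_lt.mpr (le_of_lt (lt_of_lt_of_le hb hfg))
      rw [if_neg hb', if_pos hb]; exact hxeq
    · intro h
      have hb : b < g 0 := by
        by_contra hb
        by_cases h1 : f 0 < b
        · rw [if_pos h1] at h
          have : xf < 0 := by
            by_contra h3
            exact absurd (hxf ▸ hf.le_iff_ge.mpr (not_lt.mp h3)) (not_le.mpr h1)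
          linarith [h ▸ this]
        · rw [if_neg h1, if_neg hb] at h
          linarith [h ▸ hx]
      have hb' : ¬ f 0 < b := not_lt.mpr (le_of_lt (lt_of_lt_of_le hb hfg))
      rw [if_neg hb', if_pos hb] at h
      rw [hxg, h]
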